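/- arXiv:2012.05327 — 3 statements merged into one kernel-verified Lean document; each statement's English description precedes it below -/
import Mathlib

section
/- Let K ⊆ L be a field extension, V a K-vector space, and v₀, v₁, …, vₙ ∈ V. Let h₁, …, hₙ ∈ L be linearly independent over K. If in the L-vector space L ⊗_K V we have ∑ᵢ hᵢ ⊗ vᵢ = γ ⊗ v₀ for some γ ∈ L, then the K-span of v₁, …, vₙ has dimension at most 1. -/
open TensorProduct

theorem stmt0 {K L V : Type*} [Field K] [Field L] [Algebra K L]
    [AddCommGroup V] [Module K V] {n : ℕ}
    (h : Fin n → L) (hindep : LinearIndependent K h)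
    (v₀ : V) (v : Fin n → V) (γ : L)
    (heq : (∑ i, h i ⊗ₜ[K] v i) = γ ⊗ₜ[K] v₀) :
    Module.rank K (Submodule.span K (Set.range v)) ≤ 1 := by
  classical
  have hsub := hindep.linearIndepOn_id
  set b := Module.Basis.extend hsub with hb
  have hmem : ∀ i : Fin n, h i ∈ hsub.extend (Set.subset_univ _) := fun i =>
    hsub.subset_extend _ (Set.mem_range_self i)
  -- the coordinate functionals
  set f : Fin n → (L →ₗ[K] K) := fun i => b.coord ⟨h i, hmem i⟩ with hf
  have hfh : ∀ i j, f i (h j) = if j = i then 1 else 0 := by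
    intro i j
    have hbj : b ⟨h j, hmem j⟩ = h j := Module.Basis.extend_apply_self hsub _
    rw [hf]
    simp only
    rw [← hbj, Module.Basis.coord_apply, Module.Basis.repr_self, Finsupp.single_apply]
    congr 1
    simp only [eq_iff_iff, Subtype.mk.injEq]
    constructor
    · intro hh; exact hindep.injective hh
    · intro hh; rw [hh]
  -- the map φ i : L ⊗ V → V
  have key : ∀ i : Fin n, v i = (f i γ) • v₀ := by
    intro i
    let φ : L ⊗[K] V →ₗ[K] V :=
      (TensorProduct.lid K V).toLinearMap ∘ₗ (LinearMap.rTensor V (f i))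
    have hφ : ∀ (a : L) (m : V), φ (a ⊗ₜ[K] m) = f i a • m := by
      intro a m; simp [φ]
    have := congrArg φ heq
    rw [map_sum] at this
    simp only [hφ] at this
    rw [Finset.sum_congr rfl (fun j _ => by rw [hfh i j])] at this
    simpa using this
  have hle : Submodule.span K (Set.range v) ≤ Submodule.span K {v₀} := by
    rw [Submodule.span_le]
    rintro _ ⟨i, rfl⟩
    exact Submodule.mem_span_singleton.2 ⟨f i γ, (key i).symm⟩
  calc Module.rank K (Submodule.span K (Set.range v))
      ≤ Module.rank K (Submodule.span K {v₀}) := Submodule.rank_mono hle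
    _ ≤ Cardinal.mk ({v₀} : Set V) := rank_span_le _
    _ = 1 := Cardinal.mk_singleton _
end

section
/- Let K ⊆ L be a field extension and h₀, h₁, …, hₙ ∈ L linearly independent over K. Suppose γ ∈ L satisfies γ⁻¹ = ∑ᵢ₌₀ⁿ rᵢhᵢ with rᵢ ∈ K and r₀ ≠ 0. Then for any e₁, …, eₙ ∈ K, the elements e₁ + γh₁, …, eₙ + γhₙ of L are linearly independent over K. -/
theorem stmt1 {K L : Type*} [Field K] [Field L] [Algebra K L] {n : ℕ}
    (h : Fin (n + 1) → L) (hindep : LinearIndependent K h)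
    (r : Fin (n + 1) → K) (hr0 : r 0 ≠ 0) (γ : L)
    (hγ : γ⁻¹ = ∑ i, algebraMap K L (r i) * h i)
    (e : Fin n → K) :
    LinearIndependent K (fun i : Fin n => algebraMap K L (e i) + γ * h i.succ) := by
  have hγ0 : γ ≠ 0 := by
    intro h0
    rw [h0, inv_zero] at hγ
    have h1 : ∑ i, r i • h i = 0 := by
      simp only [Algebra.smul_def]
      exact hγ.symm
    exact hr0 (Fintype.linearIndependent_iff.mp hindep r h1 0)
  rw [Fintype.linearIndependent_iff]
  intro c hc
  set S := ∑ i, c i * e i with hS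
  have h2 : algebraMap K L S + γ * ∑ i, c i • h i.succ = 0 := by
    rw [← hc, hS, map_sum, Finset.mul_sum, ← Finset.sum_add_distrib]
    refine Finset.sum_congr rfl fun i _ => ?_
    rw [Algebra.smul_def, Algebra.smul_def, map_mul]
    ring
  have h3 : γ⁻¹ * algebraMap K L S + ∑ i, c i • h i.succ = 0 := by
    have := congrArg (γ⁻¹ * ·) h2
    simp only [mul_add, ← mul_assoc, inv_mul_cancel₀ hγ0, one_mul, mul_zero] at this
    exact this
  have h4 : ∑ j, (S * r j + Fin.cases 0 c j) • h j = 0 := by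
    have expand : ∑ j, (S * r j + Fin.cases 0 c j) • h j
        = γ⁻¹ * algebraMap K L S + ∑ i, c i • h i.succ := by
      simp only [add_smul]
      rw [Finset.sum_add_distrib]
      congr 1
      · rw [hγ, Finset.sum_mul]
        refine Finset.sum_congr rfl fun j _ => ?_
        rw [Algebra.smul_def, map_mul]
        ring
      · rw [Fin.sum_univ_succ]
        simp
    rw [expand, h3]
  have key := Fintype.linearIndependent_iff.mp hindep _ h4
  have hS0 : S = 0 := by
    have := key 0
    simp at this
    rcases this with hS0 | hr
    · exact hS0
    · exact absurd hr hr0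
  intro i
  have := key i.succ
  simp [hS0, Fin.cases_succ] at this
  exact this
end

section
/- Let K ⊆ L be a field extension, h₀, …, hₙ ∈ L linearly independent over K, and r₀, …, rₙ ∈ K with r₀ ≠ 0. Then γ := (∑ᵢ₌₀ⁿ rᵢhᵢ)⁻¹ is well-defined (i.e. ∑ rᵢhᵢ ≠ 0), and for any e₁, …, eₙ ∈ K and s₁, …, sₙ ∈ K, the equation ∑ᵢ₌₁ⁿ sᵢ(eᵢ + γhᵢ) = 0 implies s₁ = ⋯ = sₙ = 0. -/
theorem stmt5 {K L : Type*} [Field K] [Field L] [Algebra K L] {n : ℕ}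
    (h : Fin (n + 1) → L) (hindep : LinearIndependent K h)
    (r : Fin (n + 1) → K) (hr0 : r 0 ≠ 0) :
    (∑ i, algebraMap K L (r i) * h i) ≠ 0 ∧
      ∀ (e s : Fin n → K),
        (∑ i, algebraMap K L (s i) *
            (algebraMap K L (e i) + (∑ j, algebraMap K L (r j) * h j)⁻¹ * h i.succ)) = 0 →
        ∀ i, s i = 0 := by
  have hli := Fintype.linearIndependent_iff.mp hindep
  have hD : (∑ i, algebraMap K L (r i) * h i) ≠ 0 := by
    intro heq
    exact hr0 (hli r (by simpa [Algebra.smul_def] using heq) 0)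
  refine ⟨hD, ?_⟩
  intro e s hs i
  set D := ∑ j, algebraMap K L (r j) * h j with hDdef
  set T := ∑ i, s i * e i with hTdef
  set S := ∑ j : Fin n, algebraMap K L (s j) * h j.succ with hSdef
  have h1 : algebraMap K L T + D⁻¹ * S = 0 := by
    rw [← hs, hTdef, hSdef, map_sum, Finset.mul_sum, ← Finset.sum_add_distrib]
    refine Finset.sum_congr rfl fun j _ => ?_
    rw [map_mul]
    ring
  have h2 : algebraMap K L T * D + S = 0 := by
    have : algebraMap K L T = -(D⁻¹ * S) := by linear_combination h1
    rw [this]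
    field_simp
    ring
  have key : ∀ j, (Fin.cases (T * r 0) (fun k => T * r k.succ + s k) j : K) = 0 := by
    apply hli
    rw [Fin.sum_univ_succ]
    simp only [Fin.cases_zero, Fin.cases_succ, add_smul]
    rw [Finset.sum_add_distrib]
    have e1 : (T * r 0) • h 0 + ∑ j : Fin n, (T * r j.succ) • h j.succ
        = algebraMap K L T * D := by
      rw [hDdef, Finset.mul_sum, Fin.sum_univ_succ]
      simp [Algebra.smul_def, map_mul, mul_assoc]
    have e2 : (∑ j : Fin n, (s j) • h j.succ) = S := by
      simp [hSdef, Algebra.smul_def]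
    rw [← add_assoc, e1, e2, h2]
  have hT0 : T = 0 := by
    have := key 0
    simp only [Fin.cases_zero] at this
    exact (mul_eq_zero.mp this).resolve_right hr0
  have := key i.succ
  simp only [Fin.cases_succ, hT0, zero_mul, zero_add] at this
  exact this
end
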